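/- Let z_1, …, z_N be complex numbers, all with |z_n| > 0, and define S = Σ_{|z_n|<1} ((|z_n|² − 1)/2 − log|z_n|) and T = Σ_{|z_n|<1} (−log|z_n|). Then S ≤ T². -/

import Mathlib

lemma key8 (x : ℝ) (hx0 : 0 < x) (hx1 : x < 1) :
    (x ^ 2 - 1) / 2 - Real.log x ≤ (Real.log x) ^ 2 := by
  set L := Real.log x with hL
  have hLneg : L < 0 := Real.log_neg hx0 hx1
  have hx2 : x ^ 2 = Real.exp (2 * L) := by
    rw [← Real.exp_log hx0, ← Real.exp_nat_mul]
    norm_num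
    exact hL.symm
  have hq : 1 + (-2 * L) + (-2 * L) ^ 2 / 2 ≤ Real.exp (-2 * L) :=
    Real.quadratic_le_exp_of_nonneg (by linarith)
  have hmul : Real.exp (2 * L) * Real.exp (-2 * L) = 1 := by
    rw [← Real.exp_add]; ring_nf; exact Real.exp_zero
  have hpos : 0 < Real.exp (2 * L) := Real.exp_pos _
  rw [hx2]
  nlinarith [sq_nonneg L, sq_nonneg (L ^ 2), Real.exp_pos (-2 * L), mul_pos hpos (Real.exp_pos (-2 * L))]

theorem stmt8 (N : ℕ) (z : Fin N → ℂ) (hz : ∀ n, 0 < ‖z n‖) :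
    (∑ n ∈ Finset.univ.filter (fun n => ‖z n‖ < 1),
        (((‖z n‖) ^ 2 - 1) / 2 - Real.log (‖z n‖))) ≤
      (∑ n ∈ Finset.univ.filter (fun n => ‖z n‖ < 1),
          -Real.log (‖z n‖)) ^ 2 := by
  set s := Finset.univ.filter (fun n => ‖z n‖ < 1) with hs
  have hmem : ∀ n ∈ s, ‖z n‖ < 1 := fun n hn => (Finset.mem_filter.mp hn).2
  have hnn : ∀ n ∈ s, 0 ≤ -Real.log (‖z n‖) := fun n hn =>
    neg_nonneg.mpr (Real.log_nonpos (norm_nonneg _) (hmem n hn).le)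
  calc (∑ n ∈ s, (((‖z n‖) ^ 2 - 1) / 2 - Real.log (‖z n‖)))
      ≤ ∑ n ∈ s, (-Real.log (‖z n‖)) ^ 2 := by
        apply Finset.sum_le_sum
        intro n hn
        have := key8 (‖z n‖) (hz n) (hmem n hn)
        simpa [neg_sq] using this
    _ ≤ (∑ n ∈ s, -Real.log (‖z n‖)) ^ 2 := by
        rw [sq]
        calc ∑ n ∈ s, (-Real.log (‖z n‖)) ^ 2
            ≤ ∑ n ∈ s, (-Real.log (‖z n‖)) *
                (∑ m ∈ s, -Real.log (‖z m‖)) := by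
              apply Finset.sum_le_sum
              intro n hn
              rw [sq]
              exact mul_le_mul_of_nonneg_left
                (Finset.single_le_sum hnn hn) (hnn n hn)
          _ = (∑ n ∈ s, -Real.log (‖z n‖)) *
                (∑ m ∈ s, -Real.log (‖z m‖)) := by
              rw [← Finset.sum_mul]
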